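/- Let p be a prime and let G = Aut(R_p) be the group of quandle automorphisms of the dihedral quandle R_p. Then G consists exactly of the maps f(x) = ax + b with a ∈ (Z/pZ)ˣ and b ∈ Z/pZ, and hence |Aut(R_p)| = p(p − 1). -/

import Mathlib

/-- The quandle automorphisms of the dihedral quandle `R_p` (`p` prime) are exactly
the affine maps `f x = a x + b` with `a` a unit, and there are `p (p - 1)` of them. -/
theorem dihedral_aut_description (p : ℕ) (hp : p.Prime) :
    ({f : ZMod p → ZMod p |
        (∀ x y : ZMod p, f (2 * y - x) = 2 * f y - f x) ∧ Function.Bijective f}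
      = {f : ZMod p → ZMod p | ∃ a b : ZMod p, IsUnit a ∧ ∀ x, f x = a * x + b}) ∧
    Nat.card {f : ZMod p → ZMod p |
        (∀ x y : ZMod p, f (2 * y - x) = 2 * f y - f x) ∧ Function.Bijective f}
      = p * (p - 1) := by
  haveI : Fact p.Prime := ⟨hp⟩
  have hset : ({f : ZMod p → ZMod p |
        (∀ x y : ZMod p, f (2 * y - x) = 2 * f y - f x) ∧ Function.Bijective f}
      = {f : ZMod p → ZMod p | ∃ a b : ZMod p, IsUnit a ∧ ∀ x, f x = a * x + b}) := by
    ext f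
    simp only [Set.mem_setOf_eq]
    constructor
    · rintro ⟨hf, hinj, hsurj⟩
      refine ⟨f 1 - f 0, f 0, ?_, ?_⟩
      · rw [isUnit_iff_ne_zero, sub_ne_zero]
        intro h
        exact one_ne_zero (hinj h)
      · -- second difference is zero
        have step : ∀ y : ZMod p, f (y + 1) = 2 * f y - f (y - 1) := by
          intro y
          have := hf (y - 1) y
          rw [show 2 * y - (y - 1) = y + 1 by ring] at this
          exact this
        have key : ∀ n : ℕ, f (n : ZMod p) = (f 1 - f 0) * n + f 0 ∧
            f ((n : ZMod p) + 1) = (f 1 - f 0) * ((n : ZMod p) + 1) + f 0 := by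
          intro n
          induction n with
          | zero => constructor <;> push_cast <;> ring
          | succ n ih =>
            obtain ⟨h1, h2⟩ := ih
            have h3 := step ((n : ZMod p) + 1)
            rw [show (n : ZMod p) + 1 - 1 = (n : ZMod p) by ring, h1, h2] at h3
            constructor
            · push_cast; rw [h2]
            · push_cast; rw [h3]; ring
        intro x
        have := (key x.val).1
        rwa [ZMod.natCast_val, ZMod.cast_id] at this
    · rintro ⟨a, b, ha, hfa⟩
      obtain ⟨u, rfl⟩ := ha
      constructor
      · intro x y; rw [hfa, hfa, hfa]; ring
      · rw [Function.bijective_iff_has_inverse]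
        refine ⟨fun y => (↑u⁻¹ : ZMod p) * (y - b), fun x => ?_, fun y => ?_⟩
        · rw [hfa]
          show (↑u⁻¹ : ZMod p) * ((u : ZMod p) * x + b - b) = x
          rw [add_sub_cancel_right, Units.inv_mul_cancel_left]
        · rw [hfa ((↑u⁻¹ : ZMod p) * (y - b))]
          have : (u : ZMod p) * ((↑u⁻¹ : ZMod p) * (y - b)) = y - b := by
            rw [← mul_assoc, ← Units.val_mul, mul_inv_cancel, Units.val_one, one_mul]
          rw [this]; ring
  refine ⟨hset, ?_⟩
  rw [hset]
  have Φbij : Function.Bijective (fun ub : (ZMod p)ˣ × ZMod p =>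
      (⟨fun x => (ub.1 : ZMod p) * x + ub.2, ub.1, ub.2, ub.1.isUnit, fun _ => rfl⟩ :
        {f : ZMod p → ZMod p | ∃ a b : ZMod p, IsUnit a ∧ ∀ x, f x = a * x + b})) := by
    constructor
    · rintro ⟨u, b⟩ ⟨v, c⟩ h
      have h' : ∀ x, (u : ZMod p) * x + b = (v : ZMod p) * x + c := by
        intro x
        exact congrFun (congrArg Subtype.val h) x
      have hb : b = c := by have := h' 0; simpa using this
      have hu : (u : ZMod p) = v := by
        have := h' 1; rw [mul_one, mul_one, hb] at this; exact add_right_cancel this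
      simp [Prod.ext_iff, hb, Units.ext_iff, hu]
    · rintro ⟨f, a, b, ha, hfa⟩
      refine ⟨⟨ha.unit, b⟩, ?_⟩
      ext x
      simp [hfa x, IsUnit.unit_spec]
  rw [← Nat.card_eq_of_bijective _ Φbij, Nat.card_prod, Nat.card_eq_fintype_card,
    ZMod.card_units_eq_totient, Nat.totient_prime hp, Nat.card_zmod, mul_comm]
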